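/- Let N = 2n+1 with n ≥ 1, and let t_j = π(2j−1)/N. Let A_{0,0} and A_{0,k}, B_{0,k}, A_{1,k}, B_{1,k} (k = 1,…,n) be arbitrary real numbers, and define T(t) = A_{0,0}/2 + (1/N) Σ_{k=1}^{n} { [(N−k)A_{0,k} − B_{1,k}] cos(kt) − [kA_{0,k} + B_{1,k}] cos((N−k)t) + [(N−k)B_{0,k} + A_{1,k}] sin(kt) + [kB_{0,k} − A_{1,k}] sin((N−k)t) }. Then for every integer j: T(t_j) = A_{0,0}/2 + Σ_{k=1}^{n} [A_{0,k} cos(k t_j) + B_{0,k} sin(k t_j)], and T′(t_j) = Σ_{k=1}^{n} [A_{1,k} cos(k t_j) + B_{1,k} sin(k t_j)]. -/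

import Mathlib

open Real Finset

private lemma hda_cos (a c : ℝ) (t : ℝ) :
    HasDerivAt (fun t : ℝ => a * Real.cos (c * t)) (-(a * (c * Real.sin (c * t)))) t := by
  have hc : HasDerivAt (fun x : ℝ => c * x) c t := by
    simpa using (hasDerivAt_id t).const_mul c
  have h := ((Real.hasDerivAt_cos (c * t)).comp t hc).const_mul a
  exact h.congr_deriv (by ring)

private lemma hda_sin (a c : ℝ) (t : ℝ) :
    HasDerivAt (fun t : ℝ => a * Real.sin (c * t)) (a * (c * Real.cos (c * t))) t := by
  have hc : HasDerivAt (fun x : ℝ => c * x) c t := by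
    simpa using (hasDerivAt_id t).const_mul c
  have h := ((Real.hasDerivAt_sin (c * t)).comp t hc).const_mul a
  exact h.congr_deriv (by ring)

/-- Formula (6): the Hermite trigonometric polynomial `T` built from the
coefficients `A₀ₖ, B₀ₖ` (of the interpolant of `f`) and `A₁ₖ, B₁ₖ` (of the
interpolant of `f'`) interpolates the corresponding trigonometric polynomials
and their values at the nodes `t_j = π(2j-1)/N` of the grid `Δ_N^{(1)}`. -/
theorem hermite_formula6_grid1 (n : ℕ) (hn : 1 ≤ n) (N : ℕ) (hN : N = 2 * n + 1)
    (A₀ B₀ A₁ B₁ : ℕ → ℝ) (T : ℝ → ℝ)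
    (hT : ∀ t : ℝ, T t = A₀ 0 / 2 + (1 / (N : ℝ)) * ∑ k ∈ Icc 1 n,
      ((((N : ℝ) - k) * A₀ k - B₁ k) * cos ((k : ℝ) * t) -
       ((k : ℝ) * A₀ k + B₁ k) * cos (((N : ℝ) - k) * t) +
       (((N : ℝ) - k) * B₀ k + A₁ k) * sin ((k : ℝ) * t) +
       ((k : ℝ) * B₀ k - A₁ k) * sin (((N : ℝ) - k) * t)))
    (j : ℤ) :
    T (π * (2 * (j : ℝ) - 1) / N) = A₀ 0 / 2 + ∑ k ∈ Icc 1 n,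
      (A₀ k * cos ((k : ℝ) * (π * (2 * (j : ℝ) - 1) / N)) +
       B₀ k * sin ((k : ℝ) * (π * (2 * (j : ℝ) - 1) / N))) ∧
    deriv T (π * (2 * (j : ℝ) - 1) / N) = ∑ k ∈ Icc 1 n,
      (A₁ k * cos ((k : ℝ) * (π * (2 * (j : ℝ) - 1) / N)) +
       B₁ k * sin ((k : ℝ) * (π * (2 * (j : ℝ) - 1) / N))) := by
  have hNpos : 0 < N := by omega
  have hNne : (N : ℝ) ≠ 0 := Nat.cast_ne_zero.mpr hNpos.ne'
  set x : ℝ := π * (2 * (j : ℝ) - 1) / N with hx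
  have hNx : (N : ℝ) * x = (2 * (j : ℝ) - 1) * π := by
    rw [hx]; field_simp
  have hcosP : Real.cos ((2 * (j : ℝ) - 1) * π) = -1 := by
    have h1 : (2 * (j : ℝ) - 1) * π = (j : ℝ) * (2 * π) - π := by ring
    rw [h1, Real.cos_sub, Real.cos_int_mul_two_pi]
    simp [Real.cos_pi, Real.sin_pi]
  have hsinP : Real.sin ((2 * (j : ℝ) - 1) * π) = 0 := by
    have h1 : (2 * (j : ℝ) - 1) * π = (2 * j - 1 : ℤ) * π := by push_cast; ring
    rw [h1, Real.sin_int_mul_pi]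
  have hC : ∀ k : ℕ, Real.cos (((N : ℝ) - k) * x) = -Real.cos ((k : ℝ) * x) := by
    intro k
    have h1 : ((N : ℝ) - k) * x = (2 * (j : ℝ) - 1) * π - (k : ℝ) * x := by
      rw [← hNx]; ring
    rw [h1, Real.cos_sub, hcosP, hsinP]; ring
  have hS : ∀ k : ℕ, Real.sin (((N : ℝ) - k) * x) = Real.sin ((k : ℝ) * x) := by
    intro k
    have h1 : ((N : ℝ) - k) * x = (2 * (j : ℝ) - 1) * π - (k : ℝ) * x := by
      rw [← hNx]; ring
    rw [h1, Real.sin_sub, hcosP, hsinP]; ring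
  constructor
  · rw [hT x]
    congr 1
    rw [Finset.mul_sum]
    refine Finset.sum_congr rfl (fun k _ => ?_)
    rw [hC k, hS k]
    field_simp
    ring
  · -- derivative part
    have hfun : T = fun t => A₀ 0 / 2 + (1 / (N : ℝ)) * ∑ k ∈ Icc 1 n,
      ((((N : ℝ) - k) * A₀ k - B₁ k) * Real.cos ((k : ℝ) * t) -
       ((k : ℝ) * A₀ k + B₁ k) * Real.cos (((N : ℝ) - k) * t) +
       (((N : ℝ) - k) * B₀ k + A₁ k) * Real.sin ((k : ℝ) * t) +
       ((k : ℝ) * B₀ k - A₁ k) * Real.sin (((N : ℝ) - k) * t)) := funext hT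
    have hd : HasDerivAt T ((1 / (N : ℝ)) * ∑ k ∈ Icc 1 n,
        (-((((N : ℝ) - k) * A₀ k - B₁ k) * ((k : ℝ) * Real.sin ((k : ℝ) * x))) -
         -(((k : ℝ) * A₀ k + B₁ k) * (((N : ℝ) - k) * Real.sin (((N : ℝ) - k) * x))) +
         (((N : ℝ) - k) * B₀ k + A₁ k) * ((k : ℝ) * Real.cos ((k : ℝ) * x)) +
         ((k : ℝ) * B₀ k - A₁ k) * (((N : ℝ) - k) * Real.cos (((N : ℝ) - k) * x)))) x := by
      rw [hfun]
      apply HasDerivAt.const_add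
      apply HasDerivAt.const_mul
      apply HasDerivAt.fun_sum
      intro k _
      exact (((hda_cos _ _ x).sub (hda_cos _ _ x)).add (hda_sin _ _ x)).add (hda_sin _ _ x)
    rw [hd.deriv]
    rw [Finset.mul_sum]
    have hsum : ∀ k ∈ Icc 1 n, (1 / (N : ℝ)) *
        (-((((N : ℝ) - k) * A₀ k - B₁ k) * ((k : ℝ) * Real.sin ((k : ℝ) * x))) -
         -(((k : ℝ) * A₀ k + B₁ k) * (((N : ℝ) - k) * Real.sin (((N : ℝ) - k) * x))) +
         (((N : ℝ) - k) * B₀ k + A₁ k) * ((k : ℝ) * Real.cos ((k : ℝ) * x)) +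
         ((k : ℝ) * B₀ k - A₁ k) * (((N : ℝ) - k) * Real.cos (((N : ℝ) - k) * x))) =
        A₁ k * Real.cos ((k : ℝ) * x) + B₁ k * Real.sin ((k : ℝ) * x) := by
      intro k _
      rw [hC k, hS k]
      field_simp
      ring
    exact Finset.sum_congr rfl hsum
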